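/- Let H be a complex Hilbert space, A : H → H a bounded linear operator, and T : H → H a linear isometry such that TA = AT and T^n → 0 weakly as n → ∞ (⟨T^n φ, ψ⟩ → 0 for all φ, ψ ∈ H). Let V be a closed subspace of H, let P : H → V be the orthogonal projection onto V and Q := I − P, and suppose Q T^n → 0 strongly as n → ∞ (i.e. ‖Q T^n φ‖ → 0 for every φ ∈ H). Define Ã : V → V by Ã := P ∘ A restricted to V. Then W_ess(Ã) = closure(W(Ã)) = closure(W(A)), and the essential norm of Ã as an operator on V satisfies ‖Ã‖_ess = ‖Ã‖ = ‖A‖. -/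

import Mathlib

open scoped ComplexInnerProductSpace
open Filter

section Defs

variable {E : Type*} [NormedAddCommGroup E] [InnerProductSpace ℂ E]

/-- The numerical range `W(A) = {⟨Aψ, ψ⟩ : ‖ψ‖ = 1}` of a bounded linear operator. -/
def numericalRange (A : E →L[ℂ] E) : Set ℂ :=
  {z | ∃ ψ : E, ‖ψ‖ = 1 ∧ z = ⟪A ψ, ψ⟫}

/-- The essential numerical range `W_ess(A) = ⋂_{K compact} closure (W(A + K))`. -/
def essNumericalRange (A : E →L[ℂ] E) : Set ℂ :=
  ⋂ (K : E →L[ℂ] E) (_ : IsCompactOperator ⇑K), closure (numericalRange (A + K))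

/-- The essential norm `‖A‖_ess = inf {‖A − K‖ : K compact}`. -/
noncomputable def essNorm (A : E →L[ℂ] E) : ℝ :=
  sInf {r : ℝ | ∃ K : E →L[ℂ] E, IsCompactOperator ⇑K ∧ r = ‖A - K‖}

end Defs

variable {H : Type*} [NormedAddCommGroup H] [InnerProductSpace ℂ H] [CompleteSpace H]

set_option linter.unusedSectionVars false
set_option maxHeartbeats 1000000

lemma aux_compact_weak_null {E : Type*} [NormedAddCommGroup E] [InnerProductSpace ℂ E]
    [CompleteSpace E] (K : E →L[ℂ] E) (hK : IsCompactOperator ⇑K) (φ : ℕ → E)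
    (hb : ∀ n, ‖φ n‖ ≤ 1)
    (hw : ∀ v : E, Tendsto (fun n => ⟪φ n, v⟫) atTop (nhds (0 : ℂ))) :
    Tendsto (fun n => K (φ n)) atTop (nhds 0) := by
  have hK' : IsCompactOperator ⇑(K : E →ₗ[ℂ] E) := hK
  have hC : IsCompact (closure (⇑(K : E →ₗ[ℂ] E) '' Metric.closedBall 0 1)) :=
    hK'.isCompact_closure_image_closedBall 1
  set C := closure (⇑(K : E →ₗ[ℂ] E) '' Metric.closedBall 0 1) with hCdef
  have hmem : ∀ n, K (φ n) ∈ C := fun n =>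
    subset_closure ⟨φ n, by simpa [Metric.mem_closedBall, dist_zero_right] using hb n, rfl⟩
  have hwK : ∀ v : E, Tendsto (fun n => ⟪K (φ n), v⟫) atTop (nhds (0 : ℂ)) := by
    intro v
    have := hw ((ContinuousLinearMap.adjoint K) v)
    simpa [ContinuousLinearMap.adjoint_inner_right] using this
  refine tendsto_of_subseq_tendsto fun ns hns => ?_
  obtain ⟨a, haC, ms, hms, hlim⟩ :=
    hC.isSeqCompact (fun k => hmem (ns k))
  have ha : a = 0 := by
    have h1 : Tendsto (fun k => ⟪K (φ (ns (ms k))), a⟫) atTop (nhds ⟪a, a⟫) :=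
      Tendsto.inner hlim tendsto_const_nhds
    have h2 : Tendsto (fun k => ⟪K (φ (ns (ms k))), a⟫) atTop (nhds (0 : ℂ)) :=
      (hwK a).comp (hns.comp hms.tendsto_atTop)
    exact inner_self_eq_zero.mp (tendsto_nhds_unique h1 h2)
  exact ⟨ms, ha ▸ hlim⟩

lemma aux_core
    (A T : H →L[ℂ] H)
    (hiso : ∀ x y : H, ⟪T x, T y⟫ = ⟪x, y⟫)
    (hcomm : T.comp A = A.comp T)
    (hweak : ∀ φ ψ : H, Tendsto (fun n : ℕ => ⟪(T ^ n) φ, ψ⟫) atTop (nhds (0 : ℂ)))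
    (V : Submodule ℂ H) [CompleteSpace V]
    (hQ : ∀ φ : H, Tendsto
      (fun n : ℕ => ‖(T ^ n) φ - ((V.orthogonalProjectionOnto ((T ^ n) φ) : V) : H)‖)
      atTop (nhds (0 : ℝ)))
    (ψ : H) (hψ : ‖ψ‖ = 1) :
    ∃ φ : ℕ → V,
      (∀ n, ‖φ n‖ ≤ 1) ∧ (∀ᶠ n in atTop, ‖φ n‖ = 1) ∧
      (∀ v : V, Tendsto (fun n => ⟪φ n, v⟫) atTop (nhds (0 : ℂ))) ∧
      Tendsto (fun n => ⟪(V.orthogonalProjectionOnto.comp (A.comp V.subtypeL)) (φ n), φ n⟫)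
        atTop (nhds ⟪A ψ, ψ⟫) ∧
      Tendsto (fun n => ‖(V.orthogonalProjectionOnto.comp (A.comp V.subtypeL)) (φ n)‖)
        atTop (nhds ‖A ψ‖) := by
  set P := V.orthogonalProjectionOnto with hP
  -- iterated isometry
  have isoTn : ∀ (n : ℕ) (x y : H), ⟪(T ^ n) x, (T ^ n) y⟫ = ⟪x, y⟫ := by
    intro n
    induction n with
    | zero => simp
    | succ n ih =>
      intro x y
      simp only [pow_succ, ContinuousLinearMap.mul_apply]
      rw [ih (T x) (T y)]
      exact hiso x y
  have isoTn_norm : ∀ (n : ℕ) (x : H), ‖(T ^ n) x‖ = ‖x‖ := by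
    intro n x
    have h := isoTn n x x
    rw [norm_eq_sqrt_re_inner (𝕜 := ℂ), h, ← norm_eq_sqrt_re_inner (𝕜 := ℂ)]
  have commn : ∀ (n : ℕ) (x : H), (T ^ n) (A x) = A ((T ^ n) x) := by
    intro n
    induction n with
    | zero => simp
    | succ n ih =>
      intro x
      have hc : ∀ y : H, T (A y) = A (T y) := fun y => by
        have := ContinuousLinearMap.ext_iff.mp hcomm y
        simpa using this
      simp only [pow_succ, ContinuousLinearMap.mul_apply]
      rw [hc x, ih (T x)]
  set ψn : ℕ → H := fun n => (T ^ n) ψ with hψn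
  set u : ℕ → V := fun n => P (ψn n) with hu
  set w : ℕ → H := fun n => (u n : H) with hw
  have hnψ : ∀ n, ‖ψn n‖ = 1 := fun n => by rw [hψn]; exact (isoTn_norm n ψ).trans hψ
  have hd : Tendsto (fun n => ‖ψn n - w n‖) atTop (nhds (0 : ℝ)) := hQ ψ
  have hPnorm : ∀ x : H, ‖(P x : V)‖ ≤ ‖x‖ := by
    intro x
    calc ‖(P x : V)‖ ≤ ‖P‖ * ‖x‖ := P.le_opNorm x
    _ ≤ 1 * ‖x‖ := by
        have := V.orthogonalProjectionOnto_norm_le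
        gcongr
    _ = ‖x‖ := one_mul _
  have hun_le : ∀ n, ‖u n‖ ≤ 1 := fun n => by
    rw [hu]; simpa [hnψ n] using hPnorm (ψn n)
  have hwn_le : ∀ n, ‖w n‖ ≤ 1 := fun n => by
    simpa using hun_le n
  have hun_lim : Tendsto (fun n => ‖u n‖) atTop (nhds (1 : ℝ)) := by
    rw [← tendsto_sub_nhds_zero_iff]
    refine squeeze_zero_norm (a := fun n => ‖ψn n - w n‖) ?_ hd
    intro n
    have : ‖u n‖ = ‖w n‖ := by simp [hw]
    rw [Real.norm_eq_abs, this, ← hnψ n]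
    calc |‖w n‖ - ‖ψn n‖| ≤ ‖w n - ψn n‖ := abs_norm_sub_norm_le _ _
    _ = ‖ψn n - w n‖ := norm_sub_rev _ _
  set r : ℕ → ℝ := fun n => (‖u n‖)⁻¹ with hr
  have hr_lim : Tendsto r atTop (nhds (1 : ℝ)) := by
    have := hun_lim.inv₀ one_ne_zero
    simpa only [inv_one] using this
  have hrc_lim : Tendsto (fun n => ((r n : ℝ) : ℂ)) atTop (nhds (1 : ℂ)) := by
    exact_mod_cast (Complex.continuous_ofReal.tendsto 1).comp hr_lim
  set φ : ℕ → V := fun n => ((r n : ℝ) : ℂ) • u n with hφ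
  have hφnorm : ∀ n, ‖φ n‖ = r n * ‖u n‖ := by
    intro n
    rw [hφ]
    simp only [norm_smul, Complex.norm_real, Real.norm_eq_abs, hr, abs_inv, abs_norm]
  have hφ_le : ∀ n, ‖φ n‖ ≤ 1 := by
    intro n
    rw [hφnorm n, hr]
    rcases eq_or_ne (‖u n‖) 0 with h | h
    · simp [h]
    · rw [inv_mul_cancel₀ h]
  have hφev : ∀ᶠ n in atTop, ‖φ n‖ = 1 := by
    filter_upwards [hun_lim.eventually (eventually_gt_nhds (by norm_num : (0:ℝ) < 1))] with n hn
    rw [hφnorm n, hr, inv_mul_cancel₀ (ne_of_gt hn)]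
  -- weak null
  have hweaknull : ∀ v : V, Tendsto (fun n => ⟪φ n, v⟫) atTop (nhds (0 : ℂ)) := by
    intro v
    have h1 : ∀ n, ⟪φ n, v⟫ = ((r n : ℝ) : ℂ) * ⟪ψn n, (v : H)⟫ := by
      intro n
      rw [hφ, inner_smul_left]
      simp only [Complex.conj_ofReal]
      congr 1
      rw [hu]
      exact Submodule.inner_orthogonalProjectionOnto_eq_of_mem_right (K := V) v (ψn n)
    simp only [h1]
    simpa only [mul_zero] using hrc_lim.mul (hweak ψ (v : H))
  -- value convergence
  set B := V.orthogonalProjectionOnto.comp (A.comp V.subtypeL) with hB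
  have hBapp : ∀ v : V, B v = P (A (v : H)) := fun v => rfl
  have hinner_u : ∀ n, ⟪B (u n), u n⟫ = ⟪A (w n), w n⟫ := by
    intro n
    rw [hBapp]
    exact Submodule.inner_orthogonalProjectionOnto_eq_of_mem_right (K := V) (u n) (A (w n))
  have hAψn : ∀ n, A (ψn n) = (T ^ n) (A ψ) := fun n => (commn n ψ).symm
  have hval_const : ∀ n, ⟪A (ψn n), ψn n⟫ = ⟪A ψ, ψ⟫ := by
    intro n
    rw [hAψn n, hψn]
    exact isoTn n (A ψ) ψ
  have hval_w : Tendsto (fun n => ⟪A (w n), w n⟫) atTop (nhds ⟪A ψ, ψ⟫) := by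
    rw [← tendsto_sub_nhds_zero_iff]
    refine squeeze_zero_norm (f := fun n => ⟪A (w n), w n⟫ - ⟪A ψ, ψ⟫) (a := fun n => 2 * ‖A‖ * ‖ψn n - w n‖) ?_ ?_
    · intro n
      show ‖⟪A (w n), w n⟫ - ⟪A ψ, ψ⟫‖ ≤ 2 * ‖A‖ * ‖ψn n - w n‖
      rw [← hval_const n]
      have key : ⟪A (w n), w n⟫ - ⟪A (ψn n), ψn n⟫
          = ⟪A (w n - ψn n), w n⟫ + ⟪A (ψn n), w n - ψn n⟫ := by
        rw [map_sub, inner_sub_left, inner_sub_right]; ring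
      rw [key]
      have n1 : ‖⟪A (w n - ψn n), w n⟫‖ ≤ ‖A‖ * ‖w n - ψn n‖ * ‖w n‖ := by
        calc ‖⟪A (w n - ψn n), w n⟫‖ ≤ ‖A (w n - ψn n)‖ * ‖w n‖ := norm_inner_le_norm _ _
        _ ≤ ‖A‖ * ‖w n - ψn n‖ * ‖w n‖ := by gcongr; exact A.le_opNorm _
      have n2 : ‖⟪A (ψn n), w n - ψn n⟫‖ ≤ ‖A‖ * ‖ψn n‖ * ‖w n - ψn n‖ := by
        calc ‖⟪A (ψn n), w n - ψn n⟫‖ ≤ ‖A (ψn n)‖ * ‖w n - ψn n‖ := norm_inner_le_norm _ _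
        _ ≤ ‖A‖ * ‖ψn n‖ * ‖w n - ψn n‖ := by gcongr; exact A.le_opNorm _
      have hrev : ‖w n - ψn n‖ = ‖ψn n - w n‖ := norm_sub_rev _ _
      have hwle := hwn_le n
      have hpsi := hnψ n
      have hAnn : (0:ℝ) ≤ ‖A‖ := norm_nonneg _
      have hdd : (0:ℝ) ≤ ‖ψn n - w n‖ := norm_nonneg _
      calc ‖⟪A (w n - ψn n), w n⟫ + ⟪A (ψn n), w n - ψn n⟫‖
          ≤ ‖⟪A (w n - ψn n), w n⟫‖ + ‖⟪A (ψn n), w n - ψn n⟫‖ := norm_add_le _ _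
      _ ≤ ‖A‖ * ‖w n - ψn n‖ * ‖w n‖ + ‖A‖ * ‖ψn n‖ * ‖w n - ψn n‖ := add_le_add n1 n2
      _ ≤ 2 * ‖A‖ * ‖ψn n - w n‖ := by
          rw [hrev, hpsi]
          have hx : ‖A‖ * ‖ψn n - w n‖ * ‖w n‖ ≤ ‖A‖ * ‖ψn n - w n‖ * 1 := by gcongr
          linarith
    · simpa using (tendsto_const_nhds (x := 2 * ‖A‖)).mul hd
  have hval : Tendsto (fun n => ⟪B (φ n), φ n⟫) atTop (nhds ⟪A ψ, ψ⟫) := by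
    have h1 : ∀ n, ⟪B (φ n), φ n⟫
        = ((r n : ℝ) : ℂ) * (((r n : ℝ) : ℂ) * ⟪A (w n), w n⟫) := by
      intro n
      rw [hφ, map_smul, inner_smul_left, inner_smul_right]
      simp only [Complex.conj_ofReal]
      rw [hinner_u n]
    simp only [h1]
    have := hrc_lim.mul (hrc_lim.mul hval_w)
    simpa using this
  -- norm convergence
  have hnormAψn : ∀ n, ‖A (ψn n)‖ = ‖A ψ‖ := fun n => by
    rw [hAψn n]; exact isoTn_norm n (A ψ)
  have hBu_lim : Tendsto (fun n => ‖B (u n)‖) atTop (nhds ‖A ψ‖) := by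
    rw [← tendsto_sub_nhds_zero_iff]
    refine squeeze_zero_norm
      (a := fun n => ‖A‖ * ‖ψn n - w n‖ + ‖(T ^ n) (A ψ) - ((P ((T ^ n) (A ψ)) : V) : H)‖) ?_ ?_
    · intro n
      have h1 : |‖B (u n)‖ - ‖A ψ‖| ≤ ‖((B (u n) : V) : H) - A (ψn n)‖ := by
        rw [← hnormAψn n]
        have : ‖B (u n)‖ = ‖((B (u n) : V) : H)‖ := by simp
        rw [this]
        exact abs_norm_sub_norm_le _ _
      rw [Real.norm_eq_abs]
      refine h1.trans ?_
      have split : ((B (u n) : V) : H) - A (ψn n)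
          = ((((P (A (w n)) : V) : H) - ((P (A (ψn n)) : V) : H)))
            + (((P (A (ψn n)) : V) : H) - A (ψn n)) := by
        rw [hBapp]
        show (((P (A (w n)) : V) : H)) - A (ψn n) = _
        abel
      rw [split]
      refine (norm_add_le _ _).trans (add_le_add ?_ ?_)
      · have e : ((P (A (w n)) : V) : H) - ((P (A (ψn n)) : V) : H)
            = ((P (A (w n) - A (ψn n)) : V) : H) := by
          rw [map_sub]; push_cast; ring
        rw [e]
        calc ‖((P (A (w n) - A (ψn n)) : V) : H)‖ = ‖(P (A (w n) - A (ψn n)) : V)‖ := by simp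
        _ ≤ ‖A (w n) - A (ψn n)‖ := hPnorm _
        _ = ‖A (w n - ψn n)‖ := by rw [map_sub]
        _ ≤ ‖A‖ * ‖w n - ψn n‖ := A.le_opNorm _
        _ = ‖A‖ * ‖ψn n - w n‖ := by rw [norm_sub_rev]
      · rw [hAψn n, norm_sub_rev]
    · have := ((tendsto_const_nhds (x := ‖A‖)).mul hd).add (hQ (A ψ))
      simpa using this
  have hnorm : Tendsto (fun n => ‖B (φ n)‖) atTop (nhds ‖A ψ‖) := by
    have h1 : ∀ n, ‖B (φ n)‖ = r n * ‖B (u n)‖ := by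
      intro n
      rw [hφ, map_smul, norm_smul]
      simp [hr, abs_inv]
    simp only [h1]
    simpa using hr_lim.mul hBu_lim
  exact ⟨φ, hφ_le, hφev, hweaknull, hval, hnorm⟩


/-- Suppose `T` is an isometry commuting with `A`, `T^n → 0` weakly, `V` is a closed
subspace of `H`, and `Q T^n → 0` strongly, where `Q = I − P` and `P` is the orthogonal
projection onto `V`. Then, for `Ã := P ∘ A` restricted to `V` (as an operator on `V`),
`W_ess(Ã) = closure (W(Ã)) = closure (W(A))` and `‖Ã‖_ess = ‖Ã‖ = ‖A‖`. -/
theorem essNumericalRange_compression_eq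
    (A T : H →L[ℂ] H)
    (hiso : ∀ x y : H, ⟪T x, T y⟫ = ⟪x, y⟫)
    (hcomm : T.comp A = A.comp T)
    (hweak : ∀ φ ψ : H, Tendsto (fun n : ℕ => ⟪(T ^ n) φ, ψ⟫) atTop (nhds (0 : ℂ)))
    (V : Submodule ℂ H) [CompleteSpace V]
    (hQ : ∀ φ : H, Tendsto
      (fun n : ℕ => ‖(T ^ n) φ - ((V.orthogonalProjectionOnto ((T ^ n) φ) : V) : H)‖)
      atTop (nhds (0 : ℝ))) :
    essNumericalRange (V.orthogonalProjectionOnto.comp (A.comp V.subtypeL)) =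
        closure (numericalRange (V.orthogonalProjectionOnto.comp (A.comp V.subtypeL))) ∧
    closure (numericalRange (V.orthogonalProjectionOnto.comp (A.comp V.subtypeL))) =
        closure (numericalRange A) ∧
    essNorm (V.orthogonalProjectionOnto.comp (A.comp V.subtypeL)) =
        ‖V.orthogonalProjectionOnto.comp (A.comp V.subtypeL)‖ ∧
    ‖V.orthogonalProjectionOnto.comp (A.comp V.subtypeL)‖ = ‖A‖ := by

  classical
  set P := V.orthogonalProjectionOnto with hP
  set B := V.orthogonalProjectionOnto.comp (A.comp V.subtypeL) with hB
  have hzero_cpt : IsCompactOperator ⇑(0 : V →L[ℂ] V) := by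
    exact isCompactOperator_zero
  -- W(B) ⊆ W(A)
  have h1 : numericalRange B ⊆ numericalRange A := by
    rintro z ⟨φ, hφ, rfl⟩
    refine ⟨(φ : H), by simpa using hφ, ?_⟩
    have : ⟪B φ, φ⟫ = ⟪A (φ : H), (φ : H)⟫ :=
      Submodule.inner_orthogonalProjectionOnto_eq_of_mem_right (K := V) φ (A (φ : H))
    rw [this]
  -- W(A) ⊆ closure W(B + K) for all compact K
  have h2 : ∀ K : V →L[ℂ] V, IsCompactOperator ⇑K →
      numericalRange A ⊆ closure (numericalRange (B + K)) := by
    rintro K hK z ⟨ψ, hψ, rfl⟩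
    obtain ⟨φ, hle, hev, hwnull, hval, hnorm⟩ := aux_core A T hiso hcomm hweak V hQ ψ hψ
    have hKnull := aux_compact_weak_null K hK φ hle hwnull
    have hKin : Tendsto (fun n => ⟪K (φ n), φ n⟫) atTop (nhds (0 : ℂ)) := by
      apply squeeze_zero_norm (a := fun n => ‖K (φ n)‖)
      · intro n
        calc ‖⟪K (φ n), φ n⟫‖ ≤ ‖K (φ n)‖ * ‖φ n‖ := norm_inner_le_norm _ _
        _ ≤ ‖K (φ n)‖ * 1 := by gcongr; exact hle n
        _ = ‖K (φ n)‖ := mul_one _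
      · exact (tendsto_zero_iff_norm_tendsto_zero.mp hKnull)
    have htot : Tendsto (fun n => ⟪(B + K) (φ n), φ n⟫) atTop (nhds ⟪A ψ, ψ⟫) := by
      have : (fun n => ⟪(B + K) (φ n), φ n⟫)
          = fun n => ⟪B (φ n), φ n⟫ + ⟪K (φ n), φ n⟫ := by
        funext n; rw [ContinuousLinearMap.add_apply, inner_add_left]
      rw [this]
      simpa only [add_zero] using hval.add hKin
    refine mem_closure_of_tendsto htot ?_
    filter_upwards [hev] with n hn
    exact ⟨φ n, hn, rfl⟩
  -- norms
  have hBA : ‖B‖ ≤ ‖A‖ := by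
    refine ContinuousLinearMap.opNorm_le_bound _ (norm_nonneg A) fun x => ?_
    have h1 : ‖B x‖ ≤ ‖A (x : H)‖ := by
      calc ‖B x‖ ≤ ‖P‖ * ‖A (x : H)‖ := P.le_opNorm _
      _ ≤ 1 * ‖A (x : H)‖ := by
          have := V.orthogonalProjectionOnto_norm_le
          gcongr
      _ = ‖A (x : H)‖ := one_mul _
    refine h1.trans ?_
    calc ‖A (x : H)‖ ≤ ‖A‖ * ‖(x : H)‖ := A.le_opNorm _
    _ = ‖A‖ * ‖x‖ := by simp
  have hAB : ∀ K : V →L[ℂ] V, IsCompactOperator ⇑K → ‖A‖ ≤ ‖B - K‖ := by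
    intro K hK
    refine ContinuousLinearMap.opNorm_le_bound _ (norm_nonneg (B - K)) fun x => ?_
    rcases eq_or_ne x 0 with rfl | hx
    · simp
    · have hxn : ‖x‖ ≠ 0 := norm_ne_zero_iff.mpr hx
      set ψ : H := ((‖x‖⁻¹ : ℝ) : ℂ) • x with hψdef
      have hψ : ‖ψ‖ = 1 := by
        rw [hψdef, norm_smul]
        simp [abs_of_nonneg (inv_nonneg.mpr (norm_nonneg x)), inv_mul_cancel₀ hxn]
      obtain ⟨φ, hle, hev, hwnull, hval, hnorm⟩ := aux_core A T hiso hcomm hweak V hQ ψ hψ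
      have hKnull := aux_compact_weak_null K hK φ hle hwnull
      have hKnn : Tendsto (fun n => ‖K (φ n)‖) atTop (nhds (0 : ℝ)) :=
        tendsto_zero_iff_norm_tendsto_zero.mp hKnull
      have hAψ : ‖A ψ‖ ≤ ‖B - K‖ := by
        have hlim : Tendsto (fun n => ‖B (φ n)‖ - ‖K (φ n)‖) atTop (nhds ‖A ψ‖) := by
          simpa only [sub_zero] using hnorm.sub hKnn
        refine le_of_tendsto hlim ?_
        filter_upwards [hev] with n hn
        have : ‖B (φ n)‖ - ‖K (φ n)‖ ≤ ‖(B - K) (φ n)‖ := by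
          have := norm_sub_norm_le (B (φ n)) (K (φ n))
          simpa [ContinuousLinearMap.sub_apply] using this
        refine this.trans ?_
        calc ‖(B - K) (φ n)‖ ≤ ‖B - K‖ * ‖φ n‖ := (B - K).le_opNorm _
        _ = ‖B - K‖ := by rw [hn, mul_one]
      have hAx : ‖A x‖ = ‖x‖ * ‖A ψ‖ := by
        rw [hψdef, map_smul, norm_smul]
        simp only [Complex.norm_real, Real.norm_eq_abs,
          abs_of_nonneg (inv_nonneg.mpr (norm_nonneg x))]
        field_simp
      rw [hAx, mul_comm]
      gcongr
  have hBAeq : ‖B‖ = ‖A‖ := by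
    refine le_antisymm hBA ?_
    have := hAB 0 hzero_cpt
    simpa using this
  -- closures of numerical ranges
  have hclos : closure (numericalRange B) = closure (numericalRange A) := by
    refine le_antisymm (closure_mono h1) ?_
    refine closure_minimal ?_ isClosed_closure
    have := h2 0 hzero_cpt
    simpa using this
  refine ⟨?_, hclos, ?_, hBAeq⟩
  · -- essential numerical range
    refine le_antisymm ?_ ?_
    · intro z hz
      simp only [essNumericalRange, Set.mem_iInter] at hz
      have := hz 0 hzero_cpt
      simpa using this
    · intro z hz
      simp only [essNumericalRange, Set.mem_iInter]
      intro K hK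
      have hz' : z ∈ closure (numericalRange A) := hclos ▸ hz
      exact closure_minimal (h2 K hK) isClosed_closure hz'
  · -- essential norm
    have h0 : ‖B‖ ∈ {r : ℝ | ∃ K : (V : Type _) →L[ℂ] (V : Type _),
        IsCompactOperator ⇑K ∧ r = ‖B - K‖} := ⟨0, hzero_cpt, by simp⟩
    have hlb : ∀ r ∈ {r : ℝ | ∃ K : (V : Type _) →L[ℂ] (V : Type _),
        IsCompactOperator ⇑K ∧ r = ‖B - K‖}, ‖B‖ ≤ r := by
      rintro r ⟨K, hK, rfl⟩
      rw [hBAeq]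
      exact hAB K hK
    exact le_antisymm (csInf_le ⟨‖B‖, hlb⟩ h0) (le_csInf ⟨_, h0⟩ hlb)
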